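/- Let p be a prime, e a positive integer, and a,b,c,d in Z/p^e with gcd(a,b,c,d,p)=1 (i.e., at least one of a,b,c,d is a unit mod p). Then the number of pairs (x,y) in (Z/p^e)^2 satisfying a*x+b*y ≡ 0 and c*x+d*y ≡ 0 (mod p^e) equals gcd(a*d-b*c, p^e). -/

import Mathlib

open scoped Classical

def Primitive {m n : ℕ} (u : Fin n → ZMod m) : Prop :=
  Nat.gcd (Finset.univ.gcd fun i => (u i).val) m = 1

def assoc {m n : ℕ} (u v : Fin n → ZMod m) : Prop :=
  ∃ lam : (ZMod m)ˣ, v = fun i => (lam : ZMod m) * u i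

def projSetoid (m n : ℕ) : Setoid {u : Fin n → ZMod m // Primitive u} where
  r u v := assoc u.1 v.1
  iseqv := by
    refine ⟨fun u => ⟨1, by simp⟩, ?_, ?_⟩
    · rintro u v ⟨l, h⟩
      refine ⟨l⁻¹, ?_⟩
      funext i
      simp [h, ← mul_assoc]
    · rintro u v w ⟨l, hl⟩ ⟨k, hk⟩
      refine ⟨k * l, ?_⟩
      funext i
      simp [hk, hl, mul_assoc]

abbrev ProjPt (m n : ℕ) := Quotient (projSetoid m n)

noncomputable def theta (n m : ℕ) : ℕ := Nat.card (ProjPt m n)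

def orthoPt (m n : ℕ) (U W : ProjPt m n) : Prop :=
  ∀ (u w : {x : Fin n → ZMod m // Primitive x}),
    Quotient.mk (projSetoid m n) u = U → Quotient.mk (projSetoid m n) w = W →
      ∑ i, u.1 i * w.1 i = 0

noncomputable def Bmat (m n : ℕ) : Matrix (ProjPt m n) (ProjPt m n) ℚ :=
  fun U V => (Nat.card {W : ProjPt m n // orthoPt m n U W ∧ orthoPt m n V W} : ℚ)

noncomputable def nuVal (p e : ℕ) (x : ZMod (p^e)) : ℕ := if x = 0 then e else padicValNat p x.val

noncomputable def nuXi (p e : ℕ) {n : ℕ} (u v : Fin n → ZMod (p^e)) : ℕ :=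
  sInf {k | ∃ i j : Fin n, k = nuVal p e (u i * v j - u j * v i)}

noncomputable def red (p e : ℕ) {n : ℕ} (u : Fin n → ZMod (p^e)) : Fin n → ZMod (p^(e-1)) :=
  fun i => ZMod.castHom (pow_dvd_pow p (Nat.sub_le e 1)) (ZMod (p^(e-1))) (u i)

noncomputable def eigMult {ι : Type*} [Fintype ι] (B : Matrix ι ι ℚ) (lam : ℚ) : ℕ :=
  Module.finrank ℚ (LinearMap.ker (B.mulVecLin - lam • (LinearMap.id : (ι → ℚ) →ₗ[ℚ] (ι → ℚ))))



lemma my_gcd_emod (z : ℤ) (n : ℕ) : Int.gcd (z % n) n = Int.gcd z n := by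
  apply Nat.dvd_antisymm
  · rw [← Int.natCast_dvd_natCast]
    refine Int.dvd_coe_gcd ?_ (Int.gcd_dvd_right _ _)
    calc (Int.gcd (z % n) n : ℤ) ∣ (n : ℤ) * (z / n) + z % n :=
          dvd_add (Dvd.dvd.mul_right (Int.gcd_dvd_right _ _) _) (Int.gcd_dvd_left _ _)
      _ = z := Int.mul_ediv_add_emod z n
  · rw [← Int.natCast_dvd_natCast]
    refine Int.dvd_coe_gcd ?_ (Int.gcd_dvd_right _ _)
    have : z % n = z - (n : ℤ) * (z / n) := by
      have := Int.mul_ediv_add_emod z n; omega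
    rw [this]
    exact dvd_sub (Int.gcd_dvd_left _ _) (Dvd.dvd.mul_right (Int.gcd_dvd_right _ _) _)

lemma my_gcd_val_eq (n : ℕ) [NeZero n] (z : ℤ) :
    Nat.gcd ((z : ZMod n)).val n = Int.gcd z n := by
  rw [← my_gcd_emod z n]
  have h : ((z : ZMod n).val : ℤ) = z % n := ZMod.val_intCast z
  rw [← h, Int.gcd_natCast_natCast]

lemma my_card_ker (n : ℕ) [NeZero n] (D : ZMod n) :
    Nat.card {y : ZMod n // D * y = 0} = Nat.gcd D.val n := by
  have hn : n ≠ 0 := NeZero.ne n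
  let f : ZMod n →+ ZMod n := AddMonoidHom.mulLeft D
  have hrange : f.range = AddSubgroup.zmultiples D := by
    ext x
    simp only [AddMonoidHom.mem_range, AddSubgroup.mem_zmultiples_iff]
    constructor
    · rintro ⟨y, rfl⟩
      exact ⟨y.val, by simp [f, AddMonoidHom.mulLeft, ZMod.natCast_val,
        ZMod.cast_id, zsmul_eq_mul, mul_comm]⟩
    · rintro ⟨k, rfl⟩
      exact ⟨(k : ZMod n), by simp [f, AddMonoidHom.mulLeft, zsmul_eq_mul, mul_comm]⟩
  have hr : Nat.card f.range = n / Nat.gcd n D.val := by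
    rw [hrange, Nat.card_zmultiples]
    conv_lhs => rw [show D = ((D.val : ℕ) : ZMod n) by simp [ZMod.natCast_val, ZMod.cast_id]]
    exact ZMod.addOrderOf_coe D.val hn
  have h1 : Nat.card (ZMod n ⧸ f.ker) * Nat.card f.ker = Nat.card (ZMod n) :=
    (AddSubgroup.card_eq_card_quotient_mul_card_addSubgroup f.ker).symm
  rw [Nat.card_zmod] at h1
  have h2 : Nat.card (ZMod n ⧸ f.ker) = Nat.card f.range :=
    Nat.card_congr (QuotientAddGroup.quotientKerEquivRange f).toEquiv
  have hg : Nat.gcd n D.val ∣ n := Nat.gcd_dvd_left n D.val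
  have hgpos : 0 < Nat.gcd n D.val := Nat.gcd_pos_of_pos_left _ (Nat.pos_of_ne_zero hn)
  have hker : Nat.card {y : ZMod n // D * y = 0} = Nat.card f.ker := rfl
  rw [hker, Nat.gcd_comm]
  rw [h2, hr] at h1
  have hd : n / Nat.gcd n D.val ∣ n := Nat.div_dvd_of_dvd hg
  have hdpos : 0 < n / Nat.gcd n D.val :=
    Nat.div_pos (Nat.le_of_dvd (Nat.pos_of_ne_zero hn) hg) hgpos
  have hk : Nat.card f.ker = n / (n / Nat.gcd n D.val) :=
    (Nat.div_eq_of_eq_mul_right hdpos h1.symm).symm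
  rw [hk, Nat.div_div_self hg hn]

lemma my_unit_case (n : ℕ) [NeZero n] (a b c d : ZMod n) (ha : IsUnit a) :
    Nat.card {xy : ZMod n × ZMod n // a * xy.1 + b * xy.2 = 0 ∧ c * xy.1 + d * xy.2 = 0}
      = Nat.card {y : ZMod n // (a * d - b * c) * y = 0} := by
  obtain ⟨u, rfl⟩ := ha
  have hi : (↑u⁻¹ : ZMod n) * u = 1 := by
    rw [← Units.val_mul, inv_mul_cancel, Units.val_one]
  refine Nat.card_congr ⟨fun xy => ⟨xy.1.2, ?_⟩,
    fun y => ⟨(-(↑u⁻¹ * b * y.1), y.1), ?_, ?_⟩, ?_, ?_⟩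
  · obtain ⟨⟨x, y⟩, h1, h2⟩ := xy
    linear_combination (u : ZMod n) * h2 - c * h1
  · obtain ⟨y, hy⟩ := y
    linear_combination (-(b * y)) * hi
  · obtain ⟨y, hy⟩ := y
    linear_combination (↑u⁻¹ : ZMod n) * hy - (d * y) * hi
  · rintro ⟨⟨x, y⟩, h1, h2⟩
    ext
    · simp only
      linear_combination (-(↑u⁻¹ : ZMod n)) * h1 + x * hi
    · rfl
  · rintro ⟨y, hy⟩
    rfl

lemma my_isUnit_of_not_dvd (p : ℕ) (hp : p.Prime) (e : ℕ) (he : 0 < e)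
    [NeZero (p^e)] (a : ZMod (p^e)) (h : ¬ p ∣ a.val) : IsUnit a := by
  have ha : a = ((a.val : ℕ) : ZMod (p^e)) := by simp [ZMod.natCast_val, ZMod.cast_id]
  rw [ha, ZMod.isUnit_iff_coprime]
  exact Nat.Coprime.pow_right e ((hp.coprime_iff_not_dvd.mpr h).symm)

theorem stmt1 (p : ℕ) (hp : p.Prime) (e : ℕ) (he : 0 < e) (a b c d : ZMod (p^e))
    (hg : Nat.gcd a.val (Nat.gcd b.val (Nat.gcd c.val (Nat.gcd d.val p))) = 1) :
    Nat.card {xy : ZMod (p^e) × ZMod (p^e) //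
        a * xy.1 + b * xy.2 = 0 ∧ c * xy.1 + d * xy.2 = 0}
      = Int.gcd ((a.val : ℤ) * (d.val : ℤ) - (b.val : ℤ) * (c.val : ℤ)) ((p : ℤ)^e) :=  by
  haveI : NeZero (p^e) := ⟨pow_ne_zero e hp.pos.ne'⟩
  set z : ℤ := (a.val : ℤ) * (d.val : ℤ) - (b.val : ℤ) * (c.val : ℤ) with hzdef
  have hcast : ((p : ℤ))^e = ((p^e : ℕ) : ℤ) := by push_cast; ring
  rw [hcast]
  have hz : ((z : ℤ) : ZMod (p^e)) = a*d - b*c := by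
    rw [hzdef]
    push_cast [ZMod.natCast_val, ZMod.cast_id]
    ring
  have hznz : (((-z) : ℤ) : ZMod (p^e)) = b*c - a*d := by
    rw [hzdef]
    push_cast [ZMod.natCast_val, ZMod.cast_id]
    ring
  have E1 : Nat.gcd (a*d - b*c).val (p^e) = Int.gcd z ((p^e : ℕ) : ℤ) := by
    rw [← hz]; exact my_gcd_val_eq _ z
  have E2 : Nat.gcd (b*c - a*d).val (p^e) = Int.gcd z ((p^e : ℕ) : ℤ) := by
    rw [← hznz, my_gcd_val_eq _ (-z), Int.neg_gcd]
  have hcases : ¬(p ∣ a.val) ∨ ¬(p ∣ b.val) ∨ ¬(p ∣ c.val) ∨ ¬(p ∣ d.val) := by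
    by_contra h
    push_neg at h
    obtain ⟨h1, h2, h3, h4⟩ := h
    have hdvd : p ∣ 1 := hg ▸
      (Nat.dvd_gcd h1 (Nat.dvd_gcd h2 (Nat.dvd_gcd h3 (Nat.dvd_gcd h4 dvd_rfl))))
    exact hp.one_lt.ne' (Nat.dvd_one.mp hdvd)
  rcases hcases with h | h | h | h
  · have ha := my_isUnit_of_not_dvd p hp e he a h
    rw [my_unit_case _ a b c d ha, my_card_ker, E1]
  · have hb := my_isUnit_of_not_dvd p hp e he b h
    have eqv : {xy : ZMod (p^e) × ZMod (p^e) //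
          a * xy.1 + b * xy.2 = 0 ∧ c * xy.1 + d * xy.2 = 0} ≃
        {xy : ZMod (p^e) × ZMod (p^e) //
          b * xy.1 + a * xy.2 = 0 ∧ d * xy.1 + c * xy.2 = 0} :=
      Equiv.subtypeEquiv (Equiv.prodComm _ _) (fun xy => by
        simp only [Equiv.prodComm_apply, Prod.fst_swap, Prod.snd_swap]
        exact ⟨fun ⟨h1, h2⟩ => ⟨by linear_combination h1, by linear_combination h2⟩,
          fun ⟨h1, h2⟩ => ⟨by linear_combination h1, by linear_combination h2⟩⟩)
    rw [Nat.card_congr eqv, my_unit_case _ b a d c hb, my_card_ker, E2]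
  · have hc := my_isUnit_of_not_dvd p hp e he c h
    have eqv : {xy : ZMod (p^e) × ZMod (p^e) //
          a * xy.1 + b * xy.2 = 0 ∧ c * xy.1 + d * xy.2 = 0} ≃
        {xy : ZMod (p^e) × ZMod (p^e) //
          c * xy.1 + d * xy.2 = 0 ∧ a * xy.1 + b * xy.2 = 0} :=
      Equiv.subtypeEquiv (Equiv.refl _) (fun xy => and_comm)
    rw [Nat.card_congr eqv, my_unit_case _ c d a b hc, my_card_ker,
      (by ring : c*b - d*a = b*c - a*d), E2]
  · have hd := my_isUnit_of_not_dvd p hp e he d h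
    have eqv : {xy : ZMod (p^e) × ZMod (p^e) //
          a * xy.1 + b * xy.2 = 0 ∧ c * xy.1 + d * xy.2 = 0} ≃
        {xy : ZMod (p^e) × ZMod (p^e) //
          d * xy.1 + c * xy.2 = 0 ∧ b * xy.1 + a * xy.2 = 0} :=
      Equiv.subtypeEquiv (Equiv.prodComm _ _) (fun xy => by
        simp only [Equiv.prodComm_apply, Prod.fst_swap, Prod.snd_swap]
        exact ⟨fun ⟨h1, h2⟩ => ⟨by linear_combination h2, by linear_combination h1⟩,
          fun ⟨h1, h2⟩ => ⟨by linear_combination h2, by linear_combination h1⟩⟩)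
    rw [Nat.card_congr eqv, my_unit_case _ d c b a hd, my_card_ker,
      (by ring : d*a - c*b = a*d - b*c), E1]
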